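/- Let p1p3 and p2p4 be two crossing segments and let ℓ be a line not through any of p1, p2, p3, p4. If ℓ crosses both of the segments p1p4 and p2p3, then ℓ crosses both of the segments p1p3 and p2p4. Consequently the number of segments among {p1p4, p2p3} crossed by ℓ is at most the number of segments among {p1p3, p2p4} crossed by ℓ. -/
import Mathlib


open scoped Classical

noncomputable section

/-- The plane. -/
abbrev Pl := ℝ × ℝ
/-- A segment, as an ordered pair of endpoints. -/
abbrev Seg := Pl × Pl

/-- The set of points of a segment. -/
def segSet (s : Seg) : Set Pl := segment ℝ s.1 s.2

/-- Two segments cross: they intersect in exactly one point which is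
not an endpoint of either. -/
def Cross (s t : Seg) : Prop :=
  ∃ x : Pl, segSet s ∩ segSet t = {x} ∧ x ≠ s.1 ∧ x ≠ s.2 ∧ x ≠ t.1 ∧ x ≠ t.2

/-- The line through two points. -/
def lineThrough (p q : Pl) : Set Pl := {x | Collinear ℝ ({p, q, x} : Set Pl)}

/-- A line crosses a segment: they intersect in exactly one point which is
not an endpoint of the segment. -/
def LineCross (l : Set Pl) (s : Seg) : Prop :=
  ∃ x : Pl, l ∩ segSet s = {x} ∧ x ≠ s.1 ∧ x ≠ s.2

/-- Signed side of the line through `a` and `b` on which `x` lies. -/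
def sideVal (a b x : Pl) : ℝ :=
  (b.1 - a.1) * (x.2 - a.2) - (b.2 - a.2) * (x.1 - a.1)

/-- General position: no three (distinct) points of `S` are collinear. -/
def GenPos (S : Set Pl) : Prop :=
  ∀ a ∈ S, ∀ b ∈ S, ∀ c ∈ S, a ≠ b → a ≠ c → b ≠ c → ¬ Collinear ℝ ({a, b, c} : Set Pl)

/-- Strictly convex position. -/
def ConvexPos (S : Set Pl) : Prop := ∀ p ∈ S, p ∉ convexHull ℝ (S \ {p})

/-- A set of segments is a matching: no degenerate segment and all endpoints distinct. -/
def IsMatching (M : Finset Seg) : Prop :=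
  (∀ s ∈ M, s.1 ≠ s.2) ∧
  ∀ s ∈ M, ∀ t ∈ M, s ≠ t → ({s.1, s.2} : Set Pl) ∩ {t.1, t.2} = ∅

/-- A perfect matching on the point set `P`. -/
def IsPM (P : Finset Pl) (M : Finset Seg) : Prop :=
  IsMatching M ∧ (∀ s ∈ M, s.1 ∈ P ∧ s.2 ∈ P) ∧
  ∀ p ∈ P, ∃ s ∈ M, p = s.1 ∨ p = s.2

/-- Number of (unordered) crossing pairs of segments of `M`. -/
def phiX (M : Finset Seg) : ℕ :=
  Set.ncard {z : Sym2 Seg | ∃ u t : Seg, z = s(u, t) ∧ u ∈ M ∧ t ∈ M ∧ Cross u t}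

/-- Number of segments of `M` crossed by the line `l`. -/
def phiLine (l : Set Pl) (M : Finset Seg) : ℕ :=
  Set.ncard {s : Seg | s ∈ M ∧ LineCross l s}

/-- All lines through two points of `P`. -/
def linesOf (P : Finset Pl) : Set (Set Pl) :=
  {l | ∃ p ∈ P, ∃ q ∈ P, p ≠ q ∧ l = lineThrough p q}

/-- The line potential with respect to a set of lines `L`. -/
def phiL (L : Set (Set Pl)) (M : Finset Seg) : ℕ := ∑ᶠ l ∈ L, phiLine l M

/-- A flip in the matching version: replace a crossing pair by one of the two
non-crossing pairs on the same four endpoints. -/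
def IsFlip (M M' : Finset Seg) : Prop :=
  ∃ p1 p2 p3 p4 : Pl,
    Cross (p1, p3) (p2, p4) ∧ (p1, p3) ∈ M ∧ (p2, p4) ∈ M ∧
    ((¬ Cross (p1, p4) (p2, p3) ∧ M' = (M \ {(p1, p3), (p2, p4)}) ∪ {(p1, p4), (p2, p3)}) ∨
     (¬ Cross (p1, p2) (p3, p4) ∧ M' = (M \ {(p1, p3), (p2, p4)}) ∪ {(p1, p2), (p3, p4)}))

/-- `t1, t2` reconnect the four endpoints of `s1, s2` forming a 4-cycle. -/
def Rewires (s1 s2 t1 t2 : Seg) : Prop :=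
  ∃ a b c d : Pl, ({s1.1, s1.2} : Set Pl) = {a, b} ∧ ({s2.1, s2.2} : Set Pl) = {c, d} ∧
    ((({t1.1, t1.2} : Set Pl) = {a, c} ∧ ({t2.1, t2.2} : Set Pl) = {b, d}) ∨
     (({t1.1, t1.2} : Set Pl) = {a, d} ∧ ({t2.1, t2.2} : Set Pl) = {b, c}))

/-- A flip in the multigraph (multiset) version. -/
def IsFlipMS (M M' : Multiset Seg) : Prop :=
  ∃ p1 p2 p3 p4 : Pl, Cross (p1, p3) (p2, p4) ∧ (p1, p3) ∈ M ∧ (p2, p4) ∈ M ∧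
    ∃ t1 t2 : Seg, Rewires (p1, p3) (p2, p4) t1 t2 ∧ ¬ Cross t1 t2 ∧
      M' = t1 ::ₘ t2 ::ₘ ((M.erase (p1, p3)).erase (p2, p4))

/-- A red-blue perfect matching: first coordinates red, second coordinates blue. -/
def IsRBPM (R B : Finset Pl) (M : Finset Seg) : Prop :=
  IsMatching M ∧ (∀ s ∈ M, s.1 ∈ R ∧ s.2 ∈ B) ∧
  (∀ p ∈ R, ∃ s ∈ M, p = s.1) ∧ (∀ p ∈ B, ∃ s ∈ M, p = s.2)

/-- A flip in the red-blue matching version (the replacement pair is forced). -/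
def IsRBFlip (M M' : Finset Seg) : Prop :=
  ∃ r1 b1 r2 b2 : Pl, Cross (r1, b1) (r2, b2) ∧ (r1, b1) ∈ M ∧ (r2, b2) ∈ M ∧
    ¬ Cross (r1, b2) (r2, b1) ∧ M' = (M \ {(r1, b1), (r2, b2)}) ∪ {(r1, b2), (r2, b1)}

/-- `T` is (the edge set of) a tour on `N` points. -/
def IsTour (T : Finset Seg) (N : ℕ) : Prop :=
  3 ≤ N ∧ ∃ v : Fin N → Pl, Function.Injective v ∧
    T = Finset.image (fun i : Fin N => (v i, v (finRotate N i))) Finset.univ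

/-- A flip in the TSP version: remove two crossing tour edges and reconnect the
four endpoints. -/
def IsTSPFlip (T T' : Finset Seg) : Prop :=
  ∃ s1 s2 t1 t2 : Seg, Cross s1 s2 ∧ s1 ∈ T ∧ s2 ∈ T ∧ Rewires s1 s2 t1 t2 ∧
    T' = (T \ {s1, s2}) ∪ {t1, t2}

/-- `a` and `b` are consecutive points on the convex-hull boundary of `Q`. -/
def HullEdge (Q : Finset Pl) (a b : Pl) : Prop :=
  a ∈ Q ∧ b ∈ Q ∧ a ≠ b ∧
  ((∀ c ∈ Q, c ≠ a → c ≠ b → 0 < sideVal a b c) ∨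
   (∀ c ∈ Q, c ≠ a → c ≠ b → sideVal a b c < 0))

/-- The line-potential drop of a flip, independent of the ambient matching. -/
def flipDrop (P : Finset Pl) (p1 p2 p3 p4 : Pl) : ℤ :=
  ∑ᶠ l ∈ linesOf P,
    ((phiLine l {(p1, p3), (p2, p4)} : ℤ) - (phiLine l {(p1, p4), (p2, p3)} : ℤ))

lemma sideVal_affine (a b p q : Pl) (u v : ℝ) (huv : u + v = 1) :
    sideVal a b (u • p + v • q) = u * sideVal a b p + v * sideVal a b q := by
  have hv : v = 1 - u := by linarith
  subst hv
  simp only [sideVal, Prod.fst_add, Prod.snd_add, Prod.smul_fst, Prod.smul_snd, smul_eq_mul]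
  ring

lemma mem_lineThrough_iff (a b x : Pl) (hab : a ≠ b) :
    x ∈ lineThrough a b ↔ sideVal a b x = 0 := by
  have ha : a ∈ ({a, b, x} : Set Pl) := by simp
  constructor
  · intro h
    rw [lineThrough, Set.mem_setOf_eq, collinear_iff_of_mem ha] at h
    obtain ⟨v, hv⟩ := h
    obtain ⟨rb, hb⟩ := hv b (by simp)
    obtain ⟨rx, hx⟩ := hv x (by simp)
    simp only [vadd_eq_add] at hb hx
    rw [hb, hx]
    simp only [sideVal, Prod.fst_add, Prod.snd_add, Prod.smul_fst, Prod.smul_snd, smul_eq_mul]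
    ring
  · intro h
    rw [lineThrough, Set.mem_setOf_eq, collinear_iff_of_mem ha]
    refine ⟨b - a, ?_⟩
    have hne : b.1 - a.1 ≠ 0 ∨ b.2 - a.2 ≠ 0 := by
      by_contra hcon
      push_neg at hcon
      exact hab (Prod.ext (by linarith [hcon.1]) (by linarith [hcon.2])).symm
    intro p hp
    simp only [Set.mem_insert_iff, Set.mem_singleton_iff] at hp
    rcases hp with rfl | rfl | rfl
    · exact ⟨0, by simp⟩
    · exact ⟨1, by simp⟩
    · unfold sideVal at h
      rcases hne with h1 | h2
      · refine ⟨(p.1 - a.1) / (b.1 - a.1), ?_⟩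
        have : p.2 - a.2 = (p.1 - a.1) / (b.1 - a.1) * (b.2 - a.2) := by
          field_simp
          nlinarith [h]
        apply Prod.ext <;> simp [vadd_eq_add, Prod.smul_fst, Prod.smul_snd] <;>
          field_simp <;> nlinarith [h]
      · refine ⟨(p.2 - a.2) / (b.2 - a.2), ?_⟩
        apply Prod.ext <;> simp [vadd_eq_add, Prod.smul_fst, Prod.smul_snd] <;>
          field_simp <;> nlinarith [h]

lemma mem_segment_iff' (p q y : Pl) :
    y ∈ segment ℝ p q ↔ ∃ u v : ℝ, 0 ≤ u ∧ 0 ≤ v ∧ u + v = 1 ∧ u • p + v • q = y := by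
  rfl


lemma combo_neg {u v sp sq : ℝ} (hu : 0 ≤ u) (hv : 0 ≤ v) (huv : u + v = 1)
    (h1 : sp < 0) (h2 : sq < 0) : u * sp + v * sq < 0 := by
  calc u * sp + v * sq ≤ u * max sp sq + v * max sp sq := by
        gcongr
        · exact le_max_left sp sq
        · exact le_max_right sp sq
    _ = max sp sq := by rw [← add_mul, huv, one_mul]
    _ < 0 := max_lt h1 h2

lemma combo_pos {u v sp sq : ℝ} (hu : 0 ≤ u) (hv : 0 ≤ v) (huv : u + v = 1)
    (h1 : 0 < sp) (h2 : 0 < sq) : 0 < u * sp + v * sq := by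
  have := combo_neg hu hv huv (neg_neg_iff_pos.mpr h1) (neg_neg_iff_pos.mpr h2)
  nlinarith

lemma lineCross_iff (a b p q : Pl) (hab : a ≠ b)
    (hp : sideVal a b p ≠ 0) (hq : sideVal a b q ≠ 0) :
    LineCross (lineThrough a b) (p, q) ↔ sideVal a b p * sideVal a b q < 0 := by
  constructor
  · rintro ⟨x, hx, -, -⟩
    have hxm : x ∈ lineThrough a b ∩ segSet (p, q) := by rw [hx]; exact rfl
    obtain ⟨hxl, hxs⟩ := hxm
    rw [mem_lineThrough_iff _ _ _ hab] at hxl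
    obtain ⟨u, v, hu, hv, huv, hx1⟩ := (mem_segment_iff' p q x).1 hxs
    have hval : u * sideVal a b p + v * sideVal a b q = 0 := by
      rw [← sideVal_affine a b p q u v huv, hx1, hxl]
    rcases hp.lt_or_gt with h | h <;> rcases hq.lt_or_gt with h' | h'
    · exact absurd hval (combo_neg hu hv huv h h').ne
    · exact mul_neg_of_neg_of_pos h h'
    · exact mul_neg_of_pos_of_neg h h'
    · exact absurd hval (combo_pos hu hv huv h h').ne'
  · intro hpq
    set sp := sideVal a b p with hsp
    set sq := sideVal a b q with hsq
    have hne : sp - sq ≠ 0 := by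
      intro h
      have h2 : sp = sq := by linarith
      rw [h2] at hpq
      nlinarith [mul_self_nonneg sq]
    set t : ℝ := sp / (sp - sq) with ht
    have ht0 : 0 < t := by
      rcases hp.lt_or_gt with h | h <;> rcases hq.lt_or_gt with h' | h'
      · nlinarith
      · exact div_pos_iff.2 (Or.inr ⟨h, by nlinarith⟩)
      · exact div_pos_iff.2 (Or.inl ⟨h, by nlinarith⟩)
      · nlinarith
    have ht1 : t < 1 := by
      rw [div_lt_one_iff]
      rcases hp.lt_or_gt with h | h <;> rcases hq.lt_or_gt with h' | h'
      · nlinarith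
      · exact Or.inr (Or.inr ⟨by nlinarith, by linarith⟩)
      · exact Or.inl ⟨by nlinarith, by linarith⟩
      · nlinarith
    set x : Pl := (1 - t) • p + t • q with hxdef
    have hxv : sideVal a b x = 0 := by
      rw [hxdef, sideVal_affine a b p q (1 - t) t (by ring), ← hsp, ← hsq, ht]
      field_simp
      ring
    have hxseg : x ∈ segSet (p, q) :=
      (mem_segment_iff' p q x).2 ⟨1 - t, t, by linarith, ht0.le, by ring, rfl⟩
    have hxl : x ∈ lineThrough a b := (mem_lineThrough_iff a b x hab).2 hxv
    refine ⟨x, ?_, ?_, ?_⟩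
    · ext y
      simp only [Set.mem_inter_iff, Set.mem_singleton_iff]
      constructor
      · rintro ⟨hyl, hys⟩
        rw [mem_lineThrough_iff _ _ _ hab] at hyl
        obtain ⟨u, v, hu, hv, huv, hy1⟩ := (mem_segment_iff' p q y).1 hys
        have hval : u * sp + v * sq = 0 := by
          rw [hsp, hsq, ← sideVal_affine a b p q u v huv, hy1, hyl]
        have h5 : v * (sp - sq) = sp := by linear_combination sp * huv - hval
        have hveq : v = t := by
          rw [ht, eq_div_iff hne]
          exact h5
        have hueq : u = 1 - t := by linarith
        rw [← hy1, hueq, hveq, hxdef]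
      · rintro rfl
        exact ⟨hxl, hxseg⟩
    · intro hcon
      rw [hcon] at hxv
      exact hp hxv
    · intro hcon
      rw [hcon] at hxv
      exact hq hxv

lemma signs_aux (s1 s2 s3 s4 : ℝ) (h1 : s1 ≠ 0) (h2 : s2 ≠ 0) (h3 : s3 ≠ 0) (h4 : s4 ≠ 0)
    (hc : ¬(0 < s1 ∧ 0 < s3 ∧ s2 < 0 ∧ s4 < 0))
    (hc' : ¬(s1 < 0 ∧ s3 < 0 ∧ 0 < s2 ∧ 0 < s4)) :
    (s1 * s4 < 0 → s2 * s3 < 0 → s1 * s3 < 0 ∧ s2 * s4 < 0) ∧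
    ((if s1 * s4 < 0 then 1 else 0) + (if s2 * s3 < 0 then 1 else 0) ≤
      (if s1 * s3 < 0 then 1 else 0) + (if s2 * s4 < 0 then (1 : ℕ) else 0)) := by
  rcases h1.lt_or_gt with h1 | h1
  · rcases h2.lt_or_gt with h2 | h2
    · rcases h3.lt_or_gt with h3 | h3
      · rcases h4.lt_or_gt with h4 | h4
        · have h14 := not_lt.2 (mul_pos_of_neg_of_neg h1 h4).le
          have h23 := not_lt.2 (mul_pos_of_neg_of_neg h2 h3).le
          have h13 := not_lt.2 (mul_pos_of_neg_of_neg h1 h3).le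
          have h24 := not_lt.2 (mul_pos_of_neg_of_neg h2 h4).le
          refine ⟨?_, ?_⟩
          · exact fun hA _ => absurd hA h14
          · rw [if_neg h14, if_neg h23, if_neg h13, if_neg h24]
            all_goals omega
        · have h14 := mul_neg_of_neg_of_pos h1 h4
          have h23 := not_lt.2 (mul_pos_of_neg_of_neg h2 h3).le
          have h13 := not_lt.2 (mul_pos_of_neg_of_neg h1 h3).le
          have h24 := mul_neg_of_neg_of_pos h2 h4
          refine ⟨?_, ?_⟩
          · exact fun _ hB => absurd hB h23
          · rw [if_pos h14, if_neg h23, if_neg h13, if_pos h24]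
            all_goals omega
      · rcases h4.lt_or_gt with h4 | h4
        · have h14 := not_lt.2 (mul_pos_of_neg_of_neg h1 h4).le
          have h23 := mul_neg_of_neg_of_pos h2 h3
          have h13 := mul_neg_of_neg_of_pos h1 h3
          have h24 := not_lt.2 (mul_pos_of_neg_of_neg h2 h4).le
          refine ⟨?_, ?_⟩
          · exact fun hA _ => absurd hA h14
          · rw [if_neg h14, if_pos h23, if_pos h13, if_neg h24]
            all_goals omega
        · have h14 := mul_neg_of_neg_of_pos h1 h4
          have h23 := mul_neg_of_neg_of_pos h2 h3
          have h13 := mul_neg_of_neg_of_pos h1 h3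
          have h24 := mul_neg_of_neg_of_pos h2 h4
          refine ⟨?_, ?_⟩
          · exact fun _ _ => ⟨h13, h24⟩
          · rw [if_pos h14, if_pos h23, if_pos h13, if_pos h24]
            all_goals omega
    · rcases h3.lt_or_gt with h3 | h3
      · rcases h4.lt_or_gt with h4 | h4
        · have h14 := not_lt.2 (mul_pos_of_neg_of_neg h1 h4).le
          have h23 := mul_neg_of_pos_of_neg h2 h3
          have h13 := not_lt.2 (mul_pos_of_neg_of_neg h1 h3).le
          have h24 := mul_neg_of_pos_of_neg h2 h4
          refine ⟨?_, ?_⟩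
          · exact fun hA _ => absurd hA h14
          · rw [if_neg h14, if_pos h23, if_neg h13, if_pos h24]
            all_goals omega
        · exact absurd ⟨h1, h3, h2, h4⟩ hc'
      · rcases h4.lt_or_gt with h4 | h4
        · have h14 := not_lt.2 (mul_pos_of_neg_of_neg h1 h4).le
          have h23 := not_lt.2 (mul_pos h2 h3).le
          have h13 := mul_neg_of_neg_of_pos h1 h3
          have h24 := mul_neg_of_pos_of_neg h2 h4
          refine ⟨?_, ?_⟩
          · exact fun hA _ => absurd hA h14
          · rw [if_neg h14, if_neg h23, if_pos h13, if_pos h24]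
            all_goals omega
        · have h14 := mul_neg_of_neg_of_pos h1 h4
          have h23 := not_lt.2 (mul_pos h2 h3).le
          have h13 := mul_neg_of_neg_of_pos h1 h3
          have h24 := not_lt.2 (mul_pos h2 h4).le
          refine ⟨?_, ?_⟩
          · exact fun _ hB => absurd hB h23
          · rw [if_pos h14, if_neg h23, if_pos h13, if_neg h24]
            all_goals omega
  · rcases h2.lt_or_gt with h2 | h2
    · rcases h3.lt_or_gt with h3 | h3
      · rcases h4.lt_or_gt with h4 | h4
        · have h14 := mul_neg_of_pos_of_neg h1 h4
          have h23 := not_lt.2 (mul_pos_of_neg_of_neg h2 h3).le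
          have h13 := mul_neg_of_pos_of_neg h1 h3
          have h24 := not_lt.2 (mul_pos_of_neg_of_neg h2 h4).le
          refine ⟨?_, ?_⟩
          · exact fun _ hB => absurd hB h23
          · rw [if_pos h14, if_neg h23, if_pos h13, if_neg h24]
            all_goals omega
        · have h14 := not_lt.2 (mul_pos h1 h4).le
          have h23 := not_lt.2 (mul_pos_of_neg_of_neg h2 h3).le
          have h13 := mul_neg_of_pos_of_neg h1 h3
          have h24 := mul_neg_of_neg_of_pos h2 h4
          refine ⟨?_, ?_⟩
          · exact fun hA _ => absurd hA h14
          · rw [if_neg h14, if_neg h23, if_pos h13, if_pos h24]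
            all_goals omega
      · rcases h4.lt_or_gt with h4 | h4
        · exact absurd ⟨h1, h3, h2, h4⟩ hc
        · have h14 := not_lt.2 (mul_pos h1 h4).le
          have h23 := mul_neg_of_neg_of_pos h2 h3
          have h13 := not_lt.2 (mul_pos h1 h3).le
          have h24 := mul_neg_of_neg_of_pos h2 h4
          refine ⟨?_, ?_⟩
          · exact fun hA _ => absurd hA h14
          · rw [if_neg h14, if_pos h23, if_neg h13, if_pos h24]
            all_goals omega
    · rcases h3.lt_or_gt with h3 | h3
      · rcases h4.lt_or_gt with h4 | h4
        · have h14 := mul_neg_of_pos_of_neg h1 h4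
          have h23 := mul_neg_of_pos_of_neg h2 h3
          have h13 := mul_neg_of_pos_of_neg h1 h3
          have h24 := mul_neg_of_pos_of_neg h2 h4
          refine ⟨?_, ?_⟩
          · exact fun _ _ => ⟨h13, h24⟩
          · rw [if_pos h14, if_pos h23, if_pos h13, if_pos h24]
            all_goals omega
        · have h14 := not_lt.2 (mul_pos h1 h4).le
          have h23 := mul_neg_of_pos_of_neg h2 h3
          have h13 := mul_neg_of_pos_of_neg h1 h3
          have h24 := not_lt.2 (mul_pos h2 h4).le
          refine ⟨?_, ?_⟩
          · exact fun hA _ => absurd hA h14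
          · rw [if_neg h14, if_pos h23, if_pos h13, if_neg h24]
            all_goals omega
      · rcases h4.lt_or_gt with h4 | h4
        · have h14 := mul_neg_of_pos_of_neg h1 h4
          have h23 := not_lt.2 (mul_pos h2 h3).le
          have h13 := not_lt.2 (mul_pos h1 h3).le
          have h24 := mul_neg_of_pos_of_neg h2 h4
          refine ⟨?_, ?_⟩
          · exact fun _ hB => absurd hB h23
          · rw [if_pos h14, if_neg h23, if_neg h13, if_pos h24]
            all_goals omega
        · have h14 := not_lt.2 (mul_pos h1 h4).le
          have h23 := not_lt.2 (mul_pos h2 h3).le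
          have h13 := not_lt.2 (mul_pos h1 h3).le
          have h24 := not_lt.2 (mul_pos h2 h4).le
          refine ⟨?_, ?_⟩
          · exact fun hA _ => absurd hA h14
          · rw [if_neg h14, if_neg h23, if_neg h13, if_neg h24]
            all_goals omega

lemma cross_not_separated (p1 p2 p3 p4 a b : Pl)
    (hcross : Cross (p1, p3) (p2, p4)) :
    ¬(0 < sideVal a b p1 ∧ 0 < sideVal a b p3 ∧ sideVal a b p2 < 0 ∧ sideVal a b p4 < 0) := by
  rintro ⟨h1, h3, h2, h4⟩
  obtain ⟨x, hx, -⟩ := hcross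
  have hxm : x ∈ segSet (p1, p3) ∩ segSet (p2, p4) := by rw [hx]; exact rfl
  obtain ⟨hx1, hx2⟩ := hxm
  obtain ⟨u, v, hu, hv, huv, he⟩ := (mem_segment_iff' p1 p3 x).1 hx1
  obtain ⟨u', v', hu', hv', huv', he'⟩ := (mem_segment_iff' p2 p4 x).1 hx2
  have e1 : sideVal a b x = u * sideVal a b p1 + v * sideVal a b p3 := by
    rw [← he, sideVal_affine a b p1 p3 u v huv]
  have e2 : sideVal a b x = u' * sideVal a b p2 + v' * sideVal a b p4 := by
    rw [← he', sideVal_affine a b p2 p4 u' v' huv']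
  have hp : 0 < sideVal a b x := e1 ▸ combo_pos hu hv huv h1 h3
  have hn : sideVal a b x < 0 := e2 ▸ combo_neg hu' hv' huv' h2 h4
  linarith

/-- if a line crosses both new segments `p1p4` and `p2p3`, it crosses both
old segments `p1p3` and `p2p4`; consequently the number of new segments crossed is at
most the number of old segments crossed. -/
theorem stmt1 (p1 p2 p3 p4 a b : Pl) (hab : a ≠ b)
    (hgp : GenPos ({p1, p2, p3, p4} : Set Pl))
    (hcross : Cross (p1, p3) (p2, p4))
    (h1 : p1 ∉ lineThrough a b) (h2 : p2 ∉ lineThrough a b)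
    (h3 : p3 ∉ lineThrough a b) (h4 : p4 ∉ lineThrough a b) :
    (LineCross (lineThrough a b) (p1, p4) → LineCross (lineThrough a b) (p2, p3) →
      LineCross (lineThrough a b) (p1, p3) ∧ LineCross (lineThrough a b) (p2, p4)) ∧
    ((if LineCross (lineThrough a b) (p1, p4) then 1 else 0) +
        (if LineCross (lineThrough a b) (p2, p3) then 1 else 0) ≤
      (if LineCross (lineThrough a b) (p1, p3) then 1 else 0) +
        (if LineCross (lineThrough a b) (p2, p4) then (1 : ℕ) else 0)) := by
  have hs1 : sideVal a b p1 ≠ 0 := fun h => h1 ((mem_lineThrough_iff a b p1 hab).2 h)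
  have hs2 : sideVal a b p2 ≠ 0 := fun h => h2 ((mem_lineThrough_iff a b p2 hab).2 h)
  have hs3 : sideVal a b p3 ≠ 0 := fun h => h3 ((mem_lineThrough_iff a b p3 hab).2 h)
  have hs4 : sideVal a b p4 ≠ 0 := fun h => h4 ((mem_lineThrough_iff a b p4 hab).2 h)
  have hc : ¬(0 < sideVal a b p1 ∧ 0 < sideVal a b p3 ∧
      sideVal a b p2 < 0 ∧ sideVal a b p4 < 0) :=
    cross_not_separated p1 p2 p3 p4 a b hcross
  have hswap : ∀ x : Pl, sideVal b a x = -(sideVal a b x) := by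
    intro x; simp only [sideVal]; ring
  have hc' : ¬(sideVal a b p1 < 0 ∧ sideVal a b p3 < 0 ∧
      0 < sideVal a b p2 ∧ 0 < sideVal a b p4) := by
    rintro ⟨g1, g3, g2, g4⟩
    exact cross_not_separated p1 p2 p3 p4 b a hcross
      ⟨by rw [hswap]; linarith, by rw [hswap]; linarith,
       by rw [hswap]; linarith, by rw [hswap]; linarith⟩
  simp only [lineCross_iff a b p1 p4 hab hs1 hs4, lineCross_iff a b p2 p3 hab hs2 hs3,
    lineCross_iff a b p1 p3 hab hs1 hs3, lineCross_iff a b p2 p4 hab hs2 hs4]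
  exact signs_aux _ _ _ _ hs1 hs2 hs3 hs4 hc hc'
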